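/- arXiv:1709.10024 — 3 statements merged into one kernel-verified Lean document; each statement's English description precedes it below -/
import Mathlib

section
/- (Control function of peer-group endogeneity, Lemma 3.1). Under the stated model, for every i ∈ {1,…,N} the conditional expectation of the outcome error given all observed characteristics, the network, and the individual's own unobserved heterogeneity depends only on the latter: 𝔼[υ_i | σ((x_j)_{j=1}^N, D_N, a_i)] = 𝔼[υ_i | σ(a_i)] almost surely. -/
open MeasureTheory ProbabilityTheory

private lemma comap_comp_le' {Ω α β : Type*} {mα : MeasurableSpace α}
    {mβ : MeasurableSpace β} (T : Ω → α) (g : α → β) (hg : Measurable g) :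
    MeasurableSpace.comap (g ∘ T) mβ ≤ MeasurableSpace.comap T mα := by
  rw [← MeasurableSpace.comap_comp]
  exact MeasurableSpace.comap_mono hg.comap_le

/-- If `X ⊥ Y` and `U ⊥ (X, Y)`, then `X ⊥ (Y, U)`. -/
private lemma indepFun_pair_right' {Ω α β γ : Type*} [MeasurableSpace Ω]
    [mα : MeasurableSpace α] [mβ : MeasurableSpace β] [mγ : MeasurableSpace γ]
    {μ : Measure Ω} [IsProbabilityMeasure μ]
    {X : Ω → α} {Y : Ω → β} {U : Ω → γ}
    (hX : Measurable X) (hY : Measurable Y) (hU : Measurable U)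
    (hXY : IndepFun X Y μ)
    (hU_XY : IndepFun U (fun ω => (X ω, Y ω)) μ) :
    IndepFun X (fun ω => (Y ω, U ω)) μ := by
  rw [IndepFun_iff_Indep]
  have hYU : Measurable (fun ω => (Y ω, U ω)) := hY.prodMk hU
  have h1 : (mα.comap X)
      = MeasurableSpace.generateFrom (Set.preimage X '' {s : Set α | MeasurableSet s}) := by
    conv_lhs => rw [← MeasurableSpace.generateFrom_measurableSet (α := α)]
    exact MeasurableSpace.comap_generateFrom
  have h2 : (MeasurableSpace.comap (fun ω => (Y ω, U ω)) inferInstance)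
      = MeasurableSpace.generateFrom (Set.preimage (fun ω => (Y ω, U ω)) ''
        (Set.image2 (· ×ˢ ·) { s : Set β | MeasurableSet s } { t : Set γ | MeasurableSet t })) := by
    conv_lhs => rw [← generateFrom_prod]
    exact MeasurableSpace.comap_generateFrom
  refine IndepSets.indep hX.comap_le hYU.comap_le ?_ ?_ h1 h2 ?_
  · have := MeasurableSpace.isPiSystem_measurableSet (α := α) |>.comap X
    convert this using 1
    rfl
  · have := (isPiSystem_prod (α := β) (β := γ)).comap (fun ω => (Y ω, U ω))
    convert this using 1
    rfl
  · rintro s t ⟨A, hA, rfl⟩ ⟨C, ⟨B, hB, G, hG, rfl⟩, rfl⟩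
    have hprect : (fun ω => (Y ω, U ω)) ⁻¹' (B ×ˢ G) = Y ⁻¹' B ∩ U ⁻¹' G :=
      Set.mk_preimage_prod _ _
    rw [hprect]
    have hXA : MeasurableSet[mα.comap X] (X ⁻¹' A) := ⟨A, hA, rfl⟩
    have hXYmem : MeasurableSet[MeasurableSpace.comap (fun ω => (X ω, Y ω)) inferInstance]
        (X ⁻¹' A ∩ Y ⁻¹' B) :=
      ⟨A ×ˢ B, hA.prod hB, Set.mk_preimage_prod _ _⟩
    have hYmem : MeasurableSet[MeasurableSpace.comap (fun ω => (X ω, Y ω)) inferInstance]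
        (Y ⁻¹' B) := ⟨Set.univ ×ˢ B, MeasurableSet.univ.prod hB, by
          rw [Set.mk_preimage_prod]; simp⟩
    have e1 : μ (X ⁻¹' A ∩ (Y ⁻¹' B ∩ U ⁻¹' G))
        = μ (X ⁻¹' A ∩ Y ⁻¹' B) * μ (U ⁻¹' G) := by
      rw [← Set.inter_assoc, Set.inter_comm _ (U ⁻¹' G)]
      rw [hU_XY.meas_inter ⟨G, hG, rfl⟩ hXYmem, mul_comm]
    have e2 : μ (X ⁻¹' A ∩ Y ⁻¹' B) = μ (X ⁻¹' A) * μ (Y ⁻¹' B) :=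
      hXY.meas_inter ⟨A, hA, rfl⟩ ⟨B, hB, rfl⟩
    have e3 : μ (Y ⁻¹' B ∩ U ⁻¹' G) = μ (Y ⁻¹' B) * μ (U ⁻¹' G) := by
      rw [Set.inter_comm, hU_XY.meas_inter ⟨G, hG, rfl⟩ hYmem, mul_comm]
    refine Filter.Eventually.of_forall fun _ => ?_
    simp only [Kernel.const_apply]
    rw [e1, e2, e3, mul_assoc]

/-- If `(f, Z) ⊥ W`, then `E[f | σ(Z, W)] = E[f | σ(Z)]` a.s. -/
private lemma condexp_comap_pair' {Ω α β : Type*} [mΩ : MeasurableSpace Ω]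
    [mα : MeasurableSpace α] [mβ : MeasurableSpace β]
    (μ : Measure Ω) [IsProbabilityMeasure μ]
    {f : Ω → ℝ} {Z : Ω → α} {W : Ω → β}
    (hfm : Measurable f) (hfi : Integrable f μ) (hZ : Measurable Z) (hW : Measurable W)
    (hindep : IndepFun (fun ω => (f ω, Z ω)) W μ) :
    μ[f | MeasurableSpace.comap (fun ω => (Z ω, W ω)) inferInstance]
      =ᵐ[μ] μ[f | MeasurableSpace.comap Z mα] := by
  have hpair : Measurable (fun ω => (Z ω, W ω)) := hZ.prodMk hW
  have hm_le : MeasurableSpace.comap (fun ω => (Z ω, W ω))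
      (inferInstance : MeasurableSpace (α × β)) ≤ mΩ := hpair.comap_le
  have hmZ_le_m : MeasurableSpace.comap Z mα
      ≤ MeasurableSpace.comap (fun ω => (Z ω, W ω)) inferInstance :=
    comap_comp_le' (fun ω => (Z ω, W ω)) Prod.fst measurable_fst
  have hmZ_le : MeasurableSpace.comap Z mα ≤ mΩ := hZ.comap_le
  have hgsm : StronglyMeasurable[MeasurableSpace.comap Z mα]
      (μ[f | MeasurableSpace.comap Z mα]) := stronglyMeasurable_condExp
  have hgi : Integrable (μ[f | MeasurableSpace.comap Z mα]) μ := integrable_condExp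
  -- independence on the Z-side at σ-algebra level
  have hIndepZW : Indep (MeasurableSpace.comap Z mα) (MeasurableSpace.comap W mβ) μ := by
    have h0 : Indep (MeasurableSpace.comap (fun ω => (f ω, Z ω)) inferInstance)
        (MeasurableSpace.comap W mβ) μ := (IndepFun_iff_Indep _ _ μ).1 hindep
    exact indep_of_indep_of_le_left h0
      (comap_comp_le' (fun ω => (f ω, Z ω)) Prod.snd measurable_snd)
  -- key set-integral computation on rectangles
  have key : ∀ (h : Ω → ℝ), Integrable h μ → ∀ {A : Set α} {B : Set β},
      MeasurableSet A → MeasurableSet B →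
      IndepFun (fun ω => h ω * A.indicator (1 : α → ℝ) (Z ω))
        (fun ω => B.indicator (1 : β → ℝ) (W ω)) μ →
      ∫ x in Z ⁻¹' A ∩ W ⁻¹' B, h x ∂μ
        = (∫ x in Z ⁻¹' A, h x ∂μ) * (μ (W ⁻¹' B)).toReal := by
    intro h hint A B hA hB hind
    have hsA : MeasurableSet (Z ⁻¹' A) := hZ hA
    have hsB : MeasurableSet (W ⁻¹' B) := hW hB
    have e1 : ∀ ω, (Z ⁻¹' A ∩ W ⁻¹' B).indicator h ω
        = (h ω * A.indicator 1 (Z ω)) * B.indicator 1 (W ω) := by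
      intro ω
      by_cases h1 : Z ω ∈ A <;> by_cases h2 : W ω ∈ B <;>
        simp [Set.indicator_apply, h1, h2, Set.mem_inter_iff]
    have hXint : Integrable (fun ω => h ω * A.indicator 1 (Z ω)) μ := by
      refine (hint.indicator hsA).congr (Filter.Eventually.of_forall fun ω => ?_)
      by_cases h1 : Z ω ∈ A <;> simp [Set.indicator_apply, h1]
    have hYint : Integrable (fun ω => B.indicator (1 : β → ℝ) (W ω)) μ := by
      refine ((integrable_const (1:ℝ)).indicator hsB).congr
        (Filter.Eventually.of_forall fun ω => ?_)
      by_cases h2 : W ω ∈ B <;> simp [Set.indicator_apply, h2]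
    have hXeq : ∫ ω, h ω * A.indicator 1 (Z ω) ∂μ = ∫ x in Z ⁻¹' A, h x ∂μ := by
      rw [← integral_indicator hsA]
      refine integral_congr_ae (Filter.Eventually.of_forall fun ω => ?_)
      by_cases h1 : Z ω ∈ A <;> simp [Set.indicator_apply, h1]
    have hYeq : ∫ ω, B.indicator (1 : β → ℝ) (W ω) ∂μ = (μ (W ⁻¹' B)).toReal := by
      rw [show (fun ω => B.indicator (1 : β → ℝ) (W ω))
          = (W ⁻¹' B).indicator (1 : Ω → ℝ) from funext fun ω => by
            by_cases h2 : W ω ∈ B <;> simp [Set.indicator_apply, h2]]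
      exact integral_indicator_one hsB
    calc ∫ x in Z ⁻¹' A ∩ W ⁻¹' B, h x ∂μ
        = ∫ ω, (h ω * A.indicator 1 (Z ω)) * B.indicator 1 (W ω) ∂μ := by
          rw [← integral_indicator (hsA.inter hsB)]
          exact integral_congr_ae (Filter.Eventually.of_forall fun ω => (e1 ω))
      _ = (∫ ω, h ω * A.indicator 1 (Z ω) ∂μ) * ∫ ω, B.indicator 1 (W ω) ∂μ :=
          hind.integral_fun_mul_eq_mul_integral hXint.aestronglyMeasurable hYint.aestronglyMeasurable
      _ = (∫ x in Z ⁻¹' A, h x ∂μ) * (μ (W ⁻¹' B)).toReal := by rw [hXeq, hYeq]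
  refine (ae_eq_condExp_of_forall_setIntegral_eq hm_le hfi
    (fun s _ _ => hgi.integrableOn) ?_ ((hgsm.mono hmZ_le_m).aestronglyMeasurable)).symm
  rintro s ⟨C, hC, rfl⟩ -
  refine MeasurableSpace.induction_on_inter
    (C := fun C _ => ∫ x in (fun ω => (Z ω, W ω)) ⁻¹' C, (μ[f | MeasurableSpace.comap Z mα]) x ∂μ
      = ∫ x in (fun ω => (Z ω, W ω)) ⁻¹' C, f x ∂μ)
    generateFrom_prod.symm isPiSystem_prod (by simp) ?_ ?_ ?_ C hC
  · -- rectangles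
    rintro t ⟨A, hA, B, hB, rfl⟩
    have hA' : MeasurableSet A := hA
    have hB' : MeasurableSet B := hB
    rw [Set.mk_preimage_prod]
    have hindf : IndepFun (fun ω => f ω * A.indicator (1 : α → ℝ) (Z ω))
        (fun ω => B.indicator (1 : β → ℝ) (W ω)) μ := by
      have hφ : Measurable (fun p : ℝ × α => p.1 * A.indicator (1 : α → ℝ) p.2) :=
        measurable_fst.mul ((measurable_one.indicator hA').comp measurable_snd)
      have hψ : Measurable (B.indicator (1 : β → ℝ)) := measurable_one.indicator hB'
      exact hindep.comp hφ hψ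
    have hindg : IndepFun
        (fun ω => (μ[f | MeasurableSpace.comap Z mα]) ω * A.indicator (1 : α → ℝ) (Z ω))
        (fun ω => B.indicator (1 : β → ℝ) (W ω)) μ := by
      rw [IndepFun_iff_Indep]
      refine indep_of_indep_of_le_left (indep_of_indep_of_le_right hIndepZW
        (comap_comp_le' W (B.indicator (1 : β → ℝ)) (measurable_one.indicator hB'))) ?_
      have hmul : Measurable[MeasurableSpace.comap Z mα]
          (fun ω => (μ[f | MeasurableSpace.comap Z mα]) ω * A.indicator (1 : α → ℝ) (Z ω)) :=
        hgsm.measurable.mul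
          ((measurable_one.indicator hA').comp (comap_measurable Z))
      exact hmul.comap_le
    have hsAmem : MeasurableSet[MeasurableSpace.comap Z mα] (Z ⁻¹' A) := ⟨A, hA', rfl⟩
    rw [key f hfi hA' hB' hindf, key _ hgi hA' hB' hindg,
      setIntegral_condExp hmZ_le hfi hsAmem]
  · -- complements
    intro t ht hPt
    rw [Set.preimage_compl]
    have hmt : MeasurableSet ((fun ω => (Z ω, W ω)) ⁻¹' t) := hpair ht
    have h1 := integral_add_compl hmt hgi
    have h2 := integral_add_compl hmt hfi
    have h3 : ∫ x, (μ[f | MeasurableSpace.comap Z mα]) x ∂μ = ∫ x, f x ∂μ :=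
      integral_condExp hmZ_le
    linarith
  · -- disjoint unions
    intro s hdisj hmeas hP
    rw [Set.preimage_iUnion]
    rw [integral_iUnion (fun n => hpair (hmeas n))
        (hdisj.mono fun i j h => Disjoint.preimage _ h) hgi.integrableOn,
      integral_iUnion (fun n => hpair (hmeas n))
        (hdisj.mono fun i j h => Disjoint.preimage _ h) hfi.integrableOn]
    exact tsum_congr hP

private def recomb {N : ℕ} {γ : Type*} (i : Fin N) (z : γ)
    (t : ↥({i}ᶜ : Finset (Fin N)) → γ) : Fin N → γ :=
  fun j => if h : j = i then z else t ⟨j, Finset.mem_compl.mpr (by simpa using h)⟩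

private lemma recomb_eq {N : ℕ} {γ : Type*} (i : Fin N) (v : Fin N → γ) :
    recomb i (v i) (fun k => v k.1) = v := by
  funext j
  unfold recomb
  by_cases h : j = i
  · subst h; simp
  · simp [h]

private lemma measurable_recomb {N : ℕ} {γ : Type*} [MeasurableSpace γ] (i : Fin N) :
    Measurable (fun p : γ × (↥({i}ᶜ : Finset (Fin N)) → γ) => recomb i p.1 p.2) := by
  apply measurable_pi_lambda
  intro j
  unfold recomb
  by_cases h : j = i
  · simp only [dif_pos h]; exact measurable_fst
  · simp only [dif_neg h]; exact (measurable_pi_apply _).comp measurable_snd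


/-- **Control function of peer-group endogeneity (Lemma 3.1).**
Under the model: (i) the triples `(xᵢ, aᵢ, υᵢ)` are i.i.d.; (ii) the network-formation
errors `u` are independent of the family `((xᵢ, aᵢ, υᵢ))ᵢ`; (iii) fixed effect:
`𝔼[υᵢ | σ(xᵢ, aᵢ)] = 𝔼[υᵢ | σ(aᵢ)]` a.s.; and the adjacency matrix is
`D = F((x₂ⱼ)ⱼ, (aⱼ)ⱼ, u)` for a measurable `F`.  Then for every `i`,
`𝔼[υᵢ | σ((xⱼ)ⱼ, D, aᵢ)] = 𝔼[υᵢ | σ(aᵢ)]` almost surely. -/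
theorem control_function_of_peer_group_endogeneity
    {Ω : Type*} [MeasurableSpace Ω] (μ : Measure Ω) [IsProbabilityMeasure μ]
    (N d₁ d₂ : ℕ) (hN : 2 ≤ N)
    (x : Fin N → Ω → (Fin d₁ → ℝ) × (Fin d₂ → ℝ))
    (a : Fin N → Ω → ℝ)
    (υ : Fin N → Ω → ℝ)
    (u : Ω → Fin N → Fin N → ℝ)
    (hx : ∀ i, Measurable (x i)) (ha : ∀ i, Measurable (a i))
    (hυmeas : ∀ i, Measurable (υ i)) (hυint : ∀ i, Integrable (υ i) μ)
    (hu : Measurable u)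
    -- (i) the triples (xᵢ, aᵢ, υᵢ), i = 1,…,N, are i.i.d.
    (hiid_indep : iIndepFun
      (fun i ω => (x i ω, a i ω, υ i ω)) μ)
    (hiid_ident : ∀ i j, IdentDistrib (fun ω => (x i ω, a i ω, υ i ω))
      (fun ω => (x j ω, a j ω, υ j ω)) μ μ)
    -- (ii) u is independent of the family ((xᵢ, aᵢ, υᵢ))ᵢ
    (hu_indep : IndepFun u (fun ω => fun i : Fin N => (x i ω, a i ω, υ i ω)) μ)
    -- (iii) fixed effect: 𝔼[υᵢ | σ(xᵢ, aᵢ)] = 𝔼[υᵢ | σ(aᵢ)] a.s.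
    (hfe : ∀ i, μ[υ i | MeasurableSpace.comap (fun ω => (x i ω, a i ω)) inferInstance]
      =ᵐ[μ] μ[υ i | MeasurableSpace.comap (a i) inferInstance])
    -- the network: D = F((x₂ⱼ)ⱼ, (aⱼ)ⱼ, u), F measurable
    (F : (Fin N → Fin d₂ → ℝ) × (Fin N → ℝ) × (Fin N → Fin N → ℝ) →
      (Fin N → Fin N → ℝ))
    (hF : Measurable F)
    (D : Ω → (Fin N → Fin N → ℝ))
    (hD : ∀ ω, D ω = F (fun j => (x j ω).2, fun j => a j ω, u ω)) :
    ∀ i, μ[υ i | MeasurableSpace.comap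
        (fun ω => (fun j => x j ω, D ω, a i ω)) inferInstance]
      =ᵐ[μ] μ[υ i | MeasurableSpace.comap (a i) inferInstance] := by
  intro i
  -- notation
  set K := ↥({i}ᶜ : Finset (Fin N)) with hK
  have hT : ∀ j, Measurable (fun ω => (x j ω, a j ω, υ j ω)) :=
    fun j => (hx j).prodMk ((ha j).prodMk (hυmeas j))
  have hZmeas : Measurable (fun ω => (x i ω, a i ω)) := (hx i).prodMk (ha i)
  have hWmeas : Measurable (fun ω => ((fun k : K => (x k.1 ω, a k.1 ω)), u ω)) :=
    (measurable_pi_lambda _ fun k : K => (hx k.1).prodMk (ha k.1)).prodMk hu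
  have hDmeas : Measurable D := by
    have hDeq : D = fun ω => F (fun j => (x j ω).2, fun j => a j ω, u ω) := funext hD
    rw [hDeq]
    exact hF.comp ((measurable_pi_lambda _ fun j => (hx j).snd).prodMk
      ((measurable_pi_lambda _ fun j => ha j).prodMk hu))
  have hbm_meas : Measurable (fun ω => (fun j => x j ω, D ω, a i ω)) :=
    (measurable_pi_lambda _ fun j => hx j).prodMk (hDmeas.prodMk (ha i))
  -- independence: (υ i, (x i, a i)) ⊥ ((x j, a j)_{j ≠ i}, u)
  have h1 : IndepFun (fun ω => fun j : ↥({i} : Finset (Fin N)) => (x j.1 ω, a j.1 ω, υ j.1 ω))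
      (fun ω => fun k : K => (x k.1 ω, a k.1 ω, υ k.1 ω)) μ :=
    hiid_indep.indepFun_finset {i} {i}ᶜ disjoint_compl_right hT
  have h2 : IndepFun (fun ω => (x i ω, a i ω, υ i ω))
      (fun ω => fun k : K => (x k.1 ω, a k.1 ω, υ k.1 ω)) μ :=
    h1.comp (measurable_pi_apply (⟨i, Finset.mem_singleton_self i⟩ : ↥({i} : Finset (Fin N))))
      measurable_id
  have h3 : IndepFun u (fun ω => ((x i ω, a i ω, υ i ω),
      fun k : K => (x k.1 ω, a k.1 ω, υ k.1 ω))) μ :=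
    hu_indep.comp measurable_id
      ((measurable_pi_apply i).prodMk (measurable_pi_lambda _ fun k => measurable_pi_apply _))
  have h4 : IndepFun (fun ω => (x i ω, a i ω, υ i ω))
      (fun ω => ((fun k : K => (x k.1 ω, a k.1 ω, υ k.1 ω)), u ω)) μ :=
    indepFun_pair_right' (hT i) (measurable_pi_lambda _ fun k => hT k.1) hu h2 h3
  have h5 : IndepFun (fun ω => (υ i ω, (x i ω, a i ω)))
      (fun ω => ((fun k : K => (x k.1 ω, a k.1 ω)), u ω)) μ := by
    refine h4.comp (φ := fun t : ((Fin d₁ → ℝ) × (Fin d₂ → ℝ)) × ℝ × ℝ => (t.2.2, (t.1, t.2.1)))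
      (ψ := fun p : (K → ((Fin d₁ → ℝ) × (Fin d₂ → ℝ)) × ℝ × ℝ) × (Fin N → Fin N → ℝ) =>
        ((fun k : K => ((p.1 k).1, (p.1 k).2.1)), p.2)) ?_ ?_
    · exact measurable_snd.snd.prodMk (measurable_fst.prodMk measurable_snd.fst)
    · exact (measurable_pi_lambda _ fun k =>
        ((measurable_pi_apply k).comp measurable_fst).fst.prodMk
        ((measurable_pi_apply k).comp measurable_fst).snd.fst).prodMk measurable_snd
  -- conditional expectation over the big pair σ-algebra
  have hcond : μ[υ i | MeasurableSpace.comap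
        (fun ω => ((x i ω, a i ω), ((fun k : K => (x k.1 ω, a k.1 ω)), u ω))) inferInstance]
      =ᵐ[μ] μ[υ i | MeasurableSpace.comap (fun ω => (x i ω, a i ω)) inferInstance] :=
    condexp_comap_pair' μ (hυmeas i) (hυint i) hZmeas hWmeas h5
  -- σ-algebra inclusions
  obtain ⟨G, hGmeas, hGcomp⟩ :
      ∃ G : (((Fin d₁ → ℝ) × (Fin d₂ → ℝ)) × ℝ) ×
          ((K → ((Fin d₁ → ℝ) × (Fin d₂ → ℝ)) × ℝ) × (Fin N → Fin N → ℝ)) →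
          (Fin N → (Fin d₁ → ℝ) × (Fin d₂ → ℝ)) × (Fin N → Fin N → ℝ) × ℝ,
        Measurable G ∧ (fun ω => (fun j => x j ω, D ω, a i ω))
          = G ∘ (fun ω => ((x i ω, a i ω), ((fun k : K => (x k.1 ω, a k.1 ω)), u ω))) := by
    refine ⟨fun p => (recomb i p.1.1 (fun k => (p.2.1 k).1),
        F (fun j => (recomb i p.1.1 (fun k => (p.2.1 k).1) j).2,
           recomb i p.1.2 (fun k => (p.2.1 k).2), p.2.2),
        p.1.2), ?_, ?_⟩
    · have inner1 : Measurable (fun p : (((Fin d₁ → ℝ) × (Fin d₂ → ℝ)) × ℝ) ×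
          ((K → ((Fin d₁ → ℝ) × (Fin d₂ → ℝ)) × ℝ) × (Fin N → Fin N → ℝ)) =>
            ((p.1.1, fun k : K => (p.2.1 k).1) :
              ((Fin d₁ → ℝ) × (Fin d₂ → ℝ)) × (K → (Fin d₁ → ℝ) × (Fin d₂ → ℝ)))) := by
        fun_prop
      have inner2 : Measurable (fun p : (((Fin d₁ → ℝ) × (Fin d₂ → ℝ)) × ℝ) ×
          ((K → ((Fin d₁ → ℝ) × (Fin d₂ → ℝ)) × ℝ) × (Fin N → Fin N → ℝ)) =>
            ((p.1.2, fun k : K => (p.2.1 k).2) : ℝ × (K → ℝ))) := by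
        fun_prop
      have r1 : Measurable (fun p : (((Fin d₁ → ℝ) × (Fin d₂ → ℝ)) × ℝ) ×
          ((K → ((Fin d₁ → ℝ) × (Fin d₂ → ℝ)) × ℝ) × (Fin N → Fin N → ℝ)) =>
            recomb i p.1.1 (fun k => (p.2.1 k).1)) :=
        (measurable_recomb i).comp inner1
      have r2 : Measurable (fun p : (((Fin d₁ → ℝ) × (Fin d₂ → ℝ)) × ℝ) ×
          ((K → ((Fin d₁ → ℝ) × (Fin d₂ → ℝ)) × ℝ) × (Fin N → Fin N → ℝ)) =>
            recomb i p.1.2 (fun k => (p.2.1 k).2)) :=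
        (measurable_recomb i).comp inner2
      exact r1.prodMk ((hF.comp ((measurable_pi_lambda _ fun j =>
        ((measurable_pi_apply j).comp r1).snd).prodMk
        (r2.prodMk measurable_snd.snd))).prodMk measurable_fst.snd)
    · funext ω
      have e1 : recomb i (x i ω) (fun k : K => x k.1 ω) = fun j => x j ω :=
        recomb_eq i (fun j => x j ω)
      have e2 : recomb i (a i ω) (fun k : K => a k.1 ω) = fun j => a j ω :=
        recomb_eq i (fun j => a j ω)
      simp only [Function.comp_apply]
      rw [hD ω]
      refine congrArg₂ Prod.mk ?_ (congrArg₂ Prod.mk ?_ rfl)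
      · exact e1.symm
      · exact congrArg F (congrArg₂ Prod.mk
          (by rw [e1]) (congrArg₂ Prod.mk (by rw [e2]) rfl))
  have hmG_le : MeasurableSpace.comap (fun ω => (fun j => x j ω, D ω, a i ω)) inferInstance
      ≤ MeasurableSpace.comap
        (fun ω => ((x i ω, a i ω), ((fun k : K => (x k.1 ω, a k.1 ω)), u ω))) inferInstance := by
    rw [hGcomp]
    exact comap_comp_le' _ G hGmeas
  have hai_le_bm : MeasurableSpace.comap (a i) inferInstance
      ≤ MeasurableSpace.comap (fun ω => (fun j => x j ω, D ω, a i ω)) inferInstance :=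
    comap_comp_le' (fun ω => (fun j => x j ω, D ω, a i ω))
      (fun p => p.2.2) measurable_snd.snd
  have hbm_le : MeasurableSpace.comap (fun ω => (fun j => x j ω, D ω, a i ω)) inferInstance
      ≤ _ := hbm_meas.comap_le
  have hpair_le : MeasurableSpace.comap
      (fun ω => ((x i ω, a i ω), ((fun k : K => (x k.1 ω, a k.1 ω)), u ω))) inferInstance
      ≤ _ := (hZmeas.prodMk hWmeas).comap_le
  calc μ[υ i | MeasurableSpace.comap (fun ω => (fun j => x j ω, D ω, a i ω)) inferInstance]
      =ᵐ[μ] μ[μ[υ i | MeasurableSpace.comap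
          (fun ω => ((x i ω, a i ω), ((fun k : K => (x k.1 ω, a k.1 ω)), u ω))) inferInstance]
        | MeasurableSpace.comap (fun ω => (fun j => x j ω, D ω, a i ω)) inferInstance] :=
        (condExp_condExp_of_le hmG_le hpair_le).symm
    _ =ᵐ[μ] μ[μ[υ i | MeasurableSpace.comap (a i) inferInstance]
        | MeasurableSpace.comap (fun ω => (fun j => x j ω, D ω, a i ω)) inferInstance] :=
        condExp_congr_ae (hcond.trans (hfe i))
    _ =ᵐ[μ] μ[υ i | MeasurableSpace.comap (a i) inferInstance] := by
        rw [condExp_of_stronglyMeasurable hbm_le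
          (stronglyMeasurable_condExp.mono hai_le_bm) integrable_condExp]
end

section
/- (Independence step in the proof of Lemma 3.1). Let Y : Ω → ℝ be integrable, let A : Ω → α and W : Ω → β be measurable maps into measurable spaces, and suppose W is independent of the pair (A, Y). Then for any measurable map ψ : α × β → γ into a measurable space, 𝔼[Y | σ(A, ψ(A, W))] = 𝔼[Y | σ(A)] almost surely; in particular, conditioning additionally on any measurable function of (A, W) does not change the conditional expectation of Y given A. -/
open MeasureTheory ProbabilityTheory

/-- comap of a composition is smaller than the comap of the inner map. -/
lemma comap_comp_le'_s1 {Ω δ ε : Type*} [MeasurableSpace δ] [MeasurableSpace ε]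
    {f : Ω → δ} {g : δ → ε} (hg : Measurable g) :
    MeasurableSpace.comap (fun ω => g (f ω)) inferInstance
      ≤ MeasurableSpace.comap f inferInstance := by
  rw [show (fun ω => g (f ω)) = g ∘ f from rfl, ← MeasurableSpace.comap_comp]
  exact MeasurableSpace.comap_mono hg.comap_le

/-- **Independence step in the proof of Lemma 3.1.**
If `W` is independent of the pair `(A, Y)`, then for any measurable `ψ`,
conditioning on `(A, ψ(A, W))` gives the same conditional expectation of `Y`
as conditioning on `A` alone. -/
theorem condexp_eq_of_indep_pair
    {Ω : Type*} [MeasurableSpace Ω] (μ : Measure Ω) [IsProbabilityMeasure μ]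
    {α β γ : Type*} [MeasurableSpace α] [MeasurableSpace β] [MeasurableSpace γ]
    (Y : Ω → ℝ) (hYmeas : Measurable Y) (hYint : Integrable Y μ)
    (A : Ω → α) (W : Ω → β) (hA : Measurable A) (hW : Measurable W)
    (hindep : IndepFun W (fun ω => (A ω, Y ω)) μ)
    (ψ : α × β → γ) (hψ : Measurable ψ) :
    μ[Y | MeasurableSpace.comap (fun ω => (A ω, ψ (A ω, W ω))) inferInstance]
      =ᵐ[μ] μ[Y | MeasurableSpace.comap A inferInstance] := by
  rename_i mΩ iProb mα mβ mγ
  have hpAW : Measurable fun ω => (A ω, W ω) := hA.prodMk hW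
  have hpG : Measurable fun ω => (A ω, ψ (A ω, W ω)) := hA.prodMk (hψ.comp hpAW)
  have hA_le : MeasurableSpace.comap A inferInstance ≤ mΩ := hA.comap_le
  have hAW_le : MeasurableSpace.comap (fun ω => (A ω, W ω)) inferInstance ≤ mΩ :=
    hpAW.comap_le
  have hG_le : MeasurableSpace.comap (fun ω => (A ω, ψ (A ω, W ω))) inferInstance ≤ mΩ :=
    hpG.comap_le
  have hA_le_G : MeasurableSpace.comap A inferInstance
      ≤ MeasurableSpace.comap (fun ω => (A ω, ψ (A ω, W ω))) inferInstance :=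
    comap_comp_le'_s1 (f := fun ω => (A ω, ψ (A ω, W ω))) (g := Prod.fst) measurable_fst
  have hG_le_AW : MeasurableSpace.comap (fun ω => (A ω, ψ (A ω, W ω))) inferInstance
      ≤ MeasurableSpace.comap (fun ω => (A ω, W ω)) inferInstance :=
    comap_comp_le'_s1 (f := fun ω => (A ω, W ω)) (g := fun p => (p.1, ψ p))
      (measurable_fst.prodMk hψ)
  have hA_le_AW : MeasurableSpace.comap A inferInstance
      ≤ MeasurableSpace.comap (fun ω => (A ω, W ω)) inferInstance :=
    comap_comp_le'_s1 (f := fun ω => (A ω, W ω)) (g := Prod.fst) measurable_fst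
  have hA_le_AY : MeasurableSpace.comap A inferInstance
      ≤ MeasurableSpace.comap (fun ω => (A ω, Y ω)) inferInstance :=
    comap_comp_le'_s1 (f := fun ω => (A ω, Y ω)) (g := Prod.fst) measurable_fst
  -- the key computation for rectangles
  have key : ∀ (u : Set α) (v : Set β), MeasurableSet u → MeasurableSet v →
      ∀ f : Ω → ℝ, Integrable f μ →
      Measurable[MeasurableSpace.comap (fun ω => (A ω, Y ω)) inferInstance] f →
      ∫ x in A ⁻¹' u ∩ W ⁻¹' v, f x ∂μ
        = (μ (W ⁻¹' v)).toReal * ∫ x in A ⁻¹' u, f x ∂μ := by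
    intro u v hu hv f hfint hfmeas
    have hX1eq : (fun ω => Set.indicator v (fun _ => (1 : ℝ)) (W ω))
        = (W ⁻¹' v).indicator fun _ => (1 : ℝ) := by
      ext ω; by_cases h : W ω ∈ v <;> simp [Set.indicator_apply, h]
    have hX2eq : (fun ω => Set.indicator u (fun _ => (1 : ℝ)) (A ω) * f ω)
        = (A ⁻¹' u).indicator f := by
      ext ω; by_cases h : A ω ∈ u <;> simp [Set.indicator_apply, h]
    have hAm : Measurable[MeasurableSpace.comap (fun ω => (A ω, Y ω)) inferInstance] A :=
      (Measurable.of_comap_le le_rfl :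
        Measurable[MeasurableSpace.comap A inferInstance] A).mono hA_le_AY le_rfl
    have hX2meas : Measurable[MeasurableSpace.comap (fun ω => (A ω, Y ω)) inferInstance]
        fun ω => Set.indicator u (fun _ => (1 : ℝ)) (A ω) * f ω :=
      ((measurable_const.indicator hu).comp hAm).mul hfmeas
    have hWX2 : IndepFun W (fun ω => Set.indicator u (fun _ => (1 : ℝ)) (A ω) * f ω) μ := by
      rw [IndepFun_iff_Indep]
      exact indep_of_indep_of_le_right ((IndepFun_iff_Indep _ _ _).mp hindep)
        hX2meas.comap_le
    have hX1X2 : IndepFun (fun ω => Set.indicator v (fun _ => (1 : ℝ)) (W ω))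
        (fun ω => Set.indicator u (fun _ => (1 : ℝ)) (A ω) * f ω) μ :=
      hWX2.comp (measurable_const.indicator hv) measurable_id
    have hX1int : Integrable (fun ω => Set.indicator v (fun _ => (1 : ℝ)) (W ω)) μ := by
      rw [hX1eq]; exact (integrable_const (1 : ℝ)).indicator (hW hv)
    have hX2int : Integrable (fun ω => Set.indicator u (fun _ => (1 : ℝ)) (A ω) * f ω) μ := by
      rw [hX2eq]; exact hfint.indicator (hA hu)
    have hprod : ((fun ω => Set.indicator v (fun _ => (1 : ℝ)) (W ω))
          * fun ω => Set.indicator u (fun _ => (1 : ℝ)) (A ω) * f ω)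
        = (A ⁻¹' u ∩ W ⁻¹' v).indicator f := by
      ext ω
      by_cases h1 : A ω ∈ u <;> by_cases h2 : W ω ∈ v <;>
        simp [Set.indicator_apply, h1, h2]
    calc ∫ x in A ⁻¹' u ∩ W ⁻¹' v, f x ∂μ
        = ∫ x, ((fun ω => Set.indicator v (fun _ => (1 : ℝ)) (W ω))
            * fun ω => Set.indicator u (fun _ => (1 : ℝ)) (A ω) * f ω) x ∂μ := by
          rw [hprod, integral_indicator ((hA hu).inter (hW hv))]
      _ = (∫ x, Set.indicator v (fun _ => (1 : ℝ)) (W x) ∂μ)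
            * ∫ x, Set.indicator u (fun _ => (1 : ℝ)) (A x) * f x ∂μ :=
          hX1X2.integral_mul_eq_mul_integral hX1int.aestronglyMeasurable hX2int.aestronglyMeasurable
      _ = (μ (W ⁻¹' v)).toReal * ∫ x in A ⁻¹' u, f x ∂μ := by
          rw [show (fun x => Set.indicator v (fun _ => (1 : ℝ)) (W x))
                = (W ⁻¹' v).indicator fun _ => (1 : ℝ) from hX1eq,
            show (fun x => Set.indicator u (fun _ => (1 : ℝ)) (A x) * f x)
                = (A ⁻¹' u).indicator f from hX2eq,
            integral_indicator (hA hu),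
            integral_indicator_const (1 : ℝ) (hW hv), smul_eq_mul, mul_one, measureReal_def]
  have hZmeasAY : Measurable[MeasurableSpace.comap (fun ω => (A ω, Y ω)) inferInstance]
      (μ[Y|MeasurableSpace.comap A inferInstance]) :=
    stronglyMeasurable_condExp.measurable.mono hA_le_AY le_rfl
  have hYmeasAY : Measurable[MeasurableSpace.comap (fun ω => (A ω, Y ω)) inferInstance] Y :=
    Measurable.of_comap_le (comap_comp_le'_s1 (f := fun ω => (A ω, Y ω))
      (g := Prod.snd) measurable_snd)
  -- main: set-integral equality for all sets in the comap of (A, W)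
  have main : ∀ t : Set (α × β), MeasurableSet t →
      ∫ x in (fun ω => (A ω, W ω)) ⁻¹' t, (μ[Y|MeasurableSpace.comap A inferInstance]) x ∂μ
        = ∫ x in (fun ω => (A ω, W ω)) ⁻¹' t, Y x ∂μ := by
    have H := MeasurableSpace.induction_on_inter
      (m := Prod.instMeasurableSpace (α := α) (β := β))
      (C := fun t _ =>
        ∫ x in (fun ω => (A ω, W ω)) ⁻¹' t, (μ[Y|MeasurableSpace.comap A inferInstance]) x ∂μ
          = ∫ x in (fun ω => (A ω, W ω)) ⁻¹' t, Y x ∂μ)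
      generateFrom_prod.symm isPiSystem_prod ?_ ?_ ?_ ?_
    · exact fun t ht => H t ht
    · simp
    · rintro _ ⟨u, hu, v, hv, rfl⟩
      rw [Set.mk_preimage_prod, key u v hu hv _ integrable_condExp hZmeasAY,
        key u v hu hv _ hYint hYmeasAY,
        setIntegral_condExp hA_le hYint ⟨u, hu, rfl⟩]
    · intro t ht h
      have hts : MeasurableSet ((fun ω => (A ω, W ω)) ⁻¹' t) := hpAW ht
      have h1 := integral_add_compl hts
        (integrable_condExp (f := Y) (m := MeasurableSpace.comap A inferInstance) (μ := μ))
      have h2 := integral_add_compl hts hYint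
      have h3 : ∫ x, (μ[Y|MeasurableSpace.comap A inferInstance]) x ∂μ = ∫ x, Y x ∂μ :=
        integral_condExp hA_le
      rw [Set.preimage_compl]
      linarith
    · intro g hdisj hmeas hind
      have hms : ∀ i, MeasurableSet ((fun ω => (A ω, W ω)) ⁻¹' g i) := fun i => hpAW (hmeas i)
      have hd : Pairwise (Function.onFun Disjoint fun i => (fun ω => (A ω, W ω)) ⁻¹' g i) :=
        fun i j hij => (hdisj hij).preimage _
      rw [Set.preimage_iUnion, integral_iUnion hms hd integrable_condExp.integrableOn,
        integral_iUnion hms hd hYint.integrableOn]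
      exact tsum_congr hind
  have hkey : μ[Y|MeasurableSpace.comap A inferInstance]
      =ᵐ[μ] μ[Y|MeasurableSpace.comap (fun ω => (A ω, W ω)) inferInstance] := by
    refine ae_eq_condExp_of_forall_setIntegral_eq hAW_le hYint
      (fun s _ _ => integrable_condExp.integrableOn) (fun s hs _ => ?_)
      (stronglyMeasurable_condExp.mono hA_le_AW).aestronglyMeasurable
    obtain ⟨t, ht, rfl⟩ := hs
    exact main t ht
  calc μ[Y|MeasurableSpace.comap (fun ω => (A ω, ψ (A ω, W ω))) inferInstance]
      =ᵐ[μ] μ[μ[Y|MeasurableSpace.comap (fun ω => (A ω, W ω)) inferInstance]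
          | MeasurableSpace.comap (fun ω => (A ω, ψ (A ω, W ω))) inferInstance] :=
        (condExp_condExp_of_le hG_le_AW hAW_le).symm
    _ =ᵐ[μ] μ[μ[Y|MeasurableSpace.comap A inferInstance]
          | MeasurableSpace.comap (fun ω => (A ω, ψ (A ω, W ω))) inferInstance] :=
        condExp_congr_ae hkey.symm
    _ =ᵐ[μ] μ[Y|MeasurableSpace.comap A inferInstance] := by
        rw [condExp_of_stronglyMeasurable hG_le
          (stronglyMeasurable_condExp.mono hA_le_G) integrable_condExp]
end

section
/- (Identification, Theorem 3.2). Under the stated model, let z_i : Ω → ℝ^L be a bounded random vector measurable with respect to σ((x_j)_{j=1}^N, D_N), let w_i : Ω → ℝ^p be a bounded random vector, let β⁰ ∈ ℝ^p, and set y_i := ⟨w_i, β⁰⟩ + υ_i, where υ_i is bounded. Assume the rank condition: the L×p matrix M := 𝔼[(z_i − 𝔼[z_i|σ(a_i)])(w_i − 𝔼[w_i|σ(a_i)])ᵀ] has rank p (full column rank). Then for every β ∈ ℝ^p: 𝔼[(z_i − 𝔼[z_i|σ(a_i)])(y_i − 𝔼[y_i|σ(a_i)] − ⟨w_i − 𝔼[w_i|σ(a_i)],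 β⟩)] = 0 if and only if β = β⁰. -/
open MeasureTheory ProbabilityTheory

set_option linter.unusedVariables false

section AuxLemmas
open MeasurableSpace

/-- Grouping lemma: if `m1 ⟂ m2` and `m3 ⟂ m1 ⊔ m2`, then `m1 ⊔ m3 ⟂ m2`. -/
lemma indep_sup_left_aux {Ω : Type*} {m1 m2 m3 : MeasurableSpace Ω}
    [m0 : MeasurableSpace Ω] {μ : Measure Ω} [IsProbabilityMeasure μ]
    (h1 : m1 ≤ m0) (h2 : m2 ≤ m0) (h3 : m3 ≤ m0)
    (h12 : Indep m1 m2 μ) (h312 : Indep m3 (m1 ⊔ m2) μ) :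
    Indep (m1 ⊔ m3) m2 μ := by
  rw [Indep_iff] at h12 h312
  set p1 : Set (Set Ω) := {st | ∃ s t, MeasurableSet[m1] s ∧ MeasurableSet[m3] t ∧ st = s ∩ t}
    with hp1def
  have hgen1 : m1 ⊔ m3 = generateFrom p1 := by
    refine le_antisymm (sup_le ?_ ?_) (generateFrom_le ?_)
    · intro s hs
      exact measurableSet_generateFrom ⟨s, Set.univ, hs, MeasurableSet.univ,
        (Set.inter_univ s).symm⟩
    · intro t ht
      exact measurableSet_generateFrom ⟨Set.univ, t, MeasurableSet.univ, ht,
        (Set.univ_inter t).symm⟩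
    · rintro st ⟨s, t, hs, ht, rfl⟩
      exact ((le_sup_left : m1 ≤ m1 ⊔ m3) s hs).inter ((le_sup_right : m3 ≤ m1 ⊔ m3) t ht)
  have hpi1 : IsPiSystem p1 := by
    rintro st ⟨s, t, hs, ht, rfl⟩ st' ⟨s', t', hs', ht', rfl⟩ -
    exact ⟨s ∩ s', t ∩ t', hs.inter hs', ht.inter ht', Set.inter_inter_inter_comm s t s' t'⟩
  refine IndepSets.indep (sup_le h1 h3) h2 hpi1 (@isPiSystem_measurableSet Ω m2) hgen1
    (@generateFrom_measurableSet Ω m2).symm ((IndepSets_iff _ _ _).2 ?_)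
  rintro st B ⟨s, t, hs, ht, rfl⟩ hB
  have hB' : MeasurableSet[m2] B := hB
  have e1 : s ∩ t ∩ B = t ∩ (s ∩ B) := by
    rw [Set.inter_comm s t, Set.inter_assoc]
  have h1' : μ (t ∩ (s ∩ B)) = μ t * (μ s * μ B) := by
    rw [h312 t (s ∩ B) ht ((le_sup_left : m1 ≤ m1 ⊔ m2) s hs |>.inter
      ((le_sup_right : m2 ≤ m1 ⊔ m2) B hB')), h12 s B hs hB']
  have h2' : μ (s ∩ t) = μ s * μ t := by
    rw [Set.inter_comm, h312 t s ht ((le_sup_left : m1 ≤ m1 ⊔ m2) s hs), mul_comm]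
  rw [e1, h1', h2']
  ring

lemma indep_mono_aux {Ω : Type*} {m1 m2 m1' m2' : MeasurableSpace Ω}
    [m0 : MeasurableSpace Ω] {μ : Measure Ω} (h : Indep m1 m2 μ)
    (h1 : m1' ≤ m1) (h2 : m2' ≤ m2) : Indep m1' m2' μ := by
  rw [Indep_iff] at h ⊢
  exact fun t1 t2 ht1 ht2 => h t1 t2 (h1 _ ht1) (h2 _ ht2)

lemma setIntegral_eq_mul_of_indep {Ω : Type*} {m2 m' : MeasurableSpace Ω}
    [m0 : MeasurableSpace Ω] {μ : Measure Ω} [IsProbabilityMeasure μ]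
    (h2 : m2 ≤ m0) (hind : Indep m2 m' μ)
    {φ : Ω → ℝ} (hφ : Measurable[m'] φ) (hφint : Integrable φ μ)
    {t : Set Ω} (ht : MeasurableSet[m2] t) :
    ∫ x in t, φ x ∂μ = (μ t).toReal * ∫ x, φ x ∂μ := by
  have hYm2 : Measurable[m2] (t.indicator (fun _ => (1:ℝ))) :=
    measurable_const.indicator ht
  have hXY : IndepFun φ (t.indicator fun _ => (1:ℝ)) μ := by
    rw [IndepFun_iff_Indep]
    exact indep_mono_aux hind.symm hφ.comap_le hYm2.comap_le
  have hYint : Integrable (t.indicator fun _ => (1:ℝ)) μ :=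
    (integrable_const (1:ℝ)).indicator (h2 _ ht)
  have hmul := hXY.integral_fun_mul_eq_mul_integral hφint.aestronglyMeasurable
    hYint.aestronglyMeasurable
  have hptw : t.indicator φ = fun x => φ x * t.indicator (fun _ => (1:ℝ)) x := by
    funext x
    by_cases hx : x ∈ t <;> simp [hx]
  calc ∫ x in t, φ x ∂μ = ∫ x, t.indicator φ x ∂μ := (integral_indicator (h2 _ ht)).symm
    _ = ∫ x, φ x * t.indicator (fun _ => (1:ℝ)) x ∂μ := by rw [hptw]
    _ = (∫ x, φ x ∂μ) * ∫ x, t.indicator (fun _ => (1:ℝ)) x ∂μ := hmul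
    _ = (μ t).toReal * ∫ x, φ x ∂μ := by
        rw [integral_indicator (h2 _ ht)]
        simp [mul_comm, Measure.real]

lemma condexp_sup_indep_aux {Ω : Type*} {m1 m2 : MeasurableSpace Ω}
    [m0 : MeasurableSpace Ω] {μ : Measure Ω} [IsProbabilityMeasure μ]
    (h1 : m1 ≤ m0) (h2 : m2 ≤ m0) {f : Ω → ℝ} (hfint : Integrable f μ) (hfmeas : Measurable f)
    (hindep : Indep m2 (m1 ⊔ MeasurableSpace.comap f inferInstance) μ) :
    μ[f | m1 ⊔ m2] =ᵐ[μ] μ[f | m1] := by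
  have h12 : m1 ⊔ m2 ≤ m0 := sup_le h1 h2
  set g := μ[f | m1] with hg
  have hgsm : StronglyMeasurable[m1] g := stronglyMeasurable_condExp
  have hgint : Integrable g μ := integrable_condExp
  set p : Set (Set Ω) := {st | ∃ s t, MeasurableSet[m1] s ∧ MeasurableSet[m2] t ∧ st = s ∩ t}
    with hpdef
  have hgen : m1 ⊔ m2 = MeasurableSpace.generateFrom p := by
    refine le_antisymm (sup_le ?_ ?_) (MeasurableSpace.generateFrom_le ?_)
    · intro s hs
      exact MeasurableSpace.measurableSet_generateFrom
        ⟨s, Set.univ, hs, MeasurableSet.univ, (Set.inter_univ s).symm⟩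
    · intro t ht
      exact MeasurableSpace.measurableSet_generateFrom
        ⟨Set.univ, t, MeasurableSet.univ, ht, (Set.univ_inter t).symm⟩
    · rintro st ⟨s, t, hs, ht, rfl⟩
      exact ((le_sup_left : m1 ≤ m1 ⊔ m2) s hs).inter ((le_sup_right : m2 ≤ m1 ⊔ m2) t ht)
  have hpi : IsPiSystem p := by
    rintro st ⟨s, t, hs, ht, rfl⟩ st' ⟨s', t', hs', ht', rfl⟩ -
    exact ⟨s ∩ s', t ∩ t', hs.inter hs', ht.inter ht', Set.inter_inter_inter_comm s t s' t'⟩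
  have hfm' : Measurable[m1 ⊔ MeasurableSpace.comap f inferInstance] f :=
    Measurable.of_comap_le le_sup_right
  have hgm' : Measurable[m1 ⊔ MeasurableSpace.comap f inferInstance] g :=
    (hgsm.measurable).mono le_sup_left le_rfl
  have key : ∀ ⦃A⦄, MeasurableSet[m1 ⊔ m2] A →
      ∫ x in A, g x ∂μ = ∫ x in A, f x ∂μ := by
    refine MeasurableSpace.induction_on_inter (m := m1 ⊔ m2)
      (C := fun A _ => ∫ x in A, g x ∂μ = ∫ x in A, f x ∂μ) hgen hpi (by simp) ?_ ?_ ?_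
    · rintro A ⟨s, t, hs, ht, rfl⟩
      have hsm0 : MeasurableSet[m0] s := h1 _ hs
      have e1 : ∫ x in s ∩ t, f x ∂μ = (μ t).toReal * ∫ x in s, f x ∂μ := by
        rw [Set.inter_comm s t, ← setIntegral_indicator hsm0,
          setIntegral_eq_mul_of_indep h2 hindep
            ((hfm'.indicator ((le_sup_left : m1 ≤ _) s hs))) (hfint.indicator hsm0) ht,
          integral_indicator hsm0]
      have e2 : ∫ x in s ∩ t, g x ∂μ = (μ t).toReal * ∫ x in s, g x ∂μ := by
        rw [Set.inter_comm s t, ← setIntegral_indicator hsm0,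
          setIntegral_eq_mul_of_indep h2 hindep
            ((hgm'.indicator ((le_sup_left : m1 ≤ _) s hs))) (hgint.indicator hsm0) ht,
          integral_indicator hsm0]
      rw [e1, e2, setIntegral_condExp h1 hfint hs]
    · intro A hA hAeq
      have hA0 : MeasurableSet[m0] A := h12 _ hA
      have cf := integral_add_compl hA0 hfint
      have cg := integral_add_compl hA0 hgint
      have ctot : ∫ x, g x ∂μ = ∫ x, f x ∂μ := integral_condExp h1
      linarith
    · intro s hdisj hmeas hCeq
      rw [integral_iUnion (fun n => h12 _ (hmeas n)) hdisj hfint.integrableOn,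
        integral_iUnion (fun n => h12 _ (hmeas n)) hdisj hgint.integrableOn]
      exact tsum_congr hCeq
  exact (ae_eq_condExp_of_forall_setIntegral_eq h12 hfint
    (fun s _ _ => hgint.integrableOn) (fun s hs _ => key hs)
    (StronglyMeasurable.aestronglyMeasurable (μ := μ)
      (hgsm.mono (le_sup_left : m1 ≤ m1 ⊔ m2)))).symm


/-- Independence of `σ((triples)_{j≠i}) ⊔ σ(u)` from `σ(triple i)`. -/
lemma indep_model_aux {Ω : Type*} {N d₁ d₂ : ℕ}
    (mT : Fin N → MeasurableSpace Ω) (mRest mU : MeasurableSpace Ω)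
    [m0 : MeasurableSpace Ω] {μ : Measure Ω} [IsProbabilityMeasure μ]
    {x : Fin N → Ω → (Fin d₁ → ℝ) × (Fin d₂ → ℝ)} {a : Fin N → Ω → ℝ} {υ : Fin N → Ω → ℝ}
    {u : Ω → Fin N → Fin N → ℝ}
    (hx : ∀ j, Measurable (x j)) (ha : ∀ j, Measurable (a j)) (hυm : ∀ j, Measurable (υ j))
    (hu : Measurable u)
    (hiid : iIndepFun
      (fun j ω => (x j ω, a j ω, υ j ω)) μ)
    (huind : IndepFun u (fun ω => fun j : Fin N => (x j ω, a j ω, υ j ω)) μ)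
    (i : Fin N)
    (hmT : ∀ j, mT j = MeasurableSpace.comap (fun ω => (x j ω, a j ω, υ j ω)) inferInstance)
    (hmRest : mRest = ⨆ j ∈ ({i}ᶜ : Set (Fin N)), mT j)
    (hmU : mU = MeasurableSpace.comap u inferInstance) :
    Indep (mRest ⊔ mU) (mT i) μ := by
  have htriple : ∀ j, Measurable (fun ω => (x j ω, a j ω, υ j ω)) :=
    fun j => (hx j).prodMk ((ha j).prodMk (hυm j))
  have hmTle : ∀ j, mT j ≤ m0 := fun j => (hmT j) ▸ (htriple j).comap_le
  have hmRestle : mRest ≤ m0 := hmRest ▸ (iSup_le fun j => iSup_le fun _ => hmTle j)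
  have hmUle : mU ≤ m0 := hmU ▸ hu.comap_le
  have hmTfun : mT = fun j =>
      MeasurableSpace.comap (fun ω => (x j ω, a j ω, υ j ω)) inferInstance := funext hmT
  have hjointle : ∀ j, mT j ≤ MeasurableSpace.comap
      (fun ω => fun k : Fin N => (x k ω, a k ω, υ k ω)) inferInstance := by
    intro j
    rw [hmT j]
    have he : (fun ω => (x j ω, a j ω, υ j ω)) =
        (fun v : Fin N → ((Fin d₁ → ℝ) × (Fin d₂ → ℝ)) × ℝ × ℝ => v j) ∘
        (fun ω => fun k : Fin N => (x k ω, a k ω, υ k ω)) := rfl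
    rw [he, ← MeasurableSpace.comap_comp]
    exact MeasurableSpace.comap_mono (measurable_pi_apply j).comap_le
  have hindep1 : Indep mRest (mT i) μ := by
    have h := indep_iSup_of_disjoint (m := mT) hmTle (hmTfun ▸ hiid.iIndep)
      (S := ({i}ᶜ : Set (Fin N))) (T := ({i} : Set (Fin N))) disjoint_compl_left
    rw [hmRest]
    simpa using h
  have hindep2 : Indep mU (mRest ⊔ mT i) μ := by
    have h : Indep mU (MeasurableSpace.comap
        (fun ω => fun k : Fin N => (x k ω, a k ω, υ k ω)) inferInstance) μ := by
      rw [hmU]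
      exact (IndepFun_iff_Indep _ _ _).1 huind
    exact indep_mono_aux h le_rfl
      (sup_le (hmRest ▸ iSup_le fun j => iSup_le fun _ => hjointle j) (hjointle i))
  exact indep_sup_left_aux hmRestle (hmTle i) hmUle hindep1 hindep2

/-- `z` (a function of `(x_j)_j` and the network `D`) is measurable w.r.t. the big σ-algebra. -/
lemma zmeas_model_aux {Ω : Type*} {N d₁ d₂ L : ℕ}
    (mT : Fin N → MeasurableSpace Ω) (mH mRest mU : MeasurableSpace Ω)
    [m0 : MeasurableSpace Ω]
    {x : Fin N → Ω → (Fin d₁ → ℝ) × (Fin d₂ → ℝ)} {a : Fin N → Ω → ℝ} {υ : Fin N → Ω → ℝ}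
    {u : Ω → Fin N → Fin N → ℝ}
    (i : Fin N)
    (hmT : ∀ j, mT j = MeasurableSpace.comap (fun ω => (x j ω, a j ω, υ j ω)) inferInstance)
    (hmH : mH = MeasurableSpace.comap (fun ω => (x i ω, a i ω)) inferInstance)
    (hmRest : mRest = ⨆ j ∈ ({i}ᶜ : Set (Fin N)), mT j)
    (hmU : mU = MeasurableSpace.comap u inferInstance)
    {F : (Fin N → Fin d₂ → ℝ) × (Fin N → ℝ) × (Fin N → Fin N → ℝ) → (Fin N → Fin N → ℝ)}
    (hF : Measurable F)
    {D : Ω → (Fin N → Fin N → ℝ)}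
    (hD : ∀ ω, D ω = F (fun j => (x j ω).2, fun j => a j ω, u ω))
    {z : Ω → Fin L → ℝ}
    (hz : Measurable[MeasurableSpace.comap (fun ω => (fun j => x j ω, D ω)) inferInstance] z)
    (l : Fin L) :
    Measurable[mH ⊔ (mRest ⊔ mU)] (fun ω => z ω l) := by
  have hxaB : Measurable[mH] (fun ω => (x i ω, a i ω)) := by
    rw [hmH]; exact Measurable.of_comap_le le_rfl
  have htB : ∀ j, j ≠ i → Measurable[mH ⊔ (mRest ⊔ mU)] (fun ω => (x j ω, a j ω, υ j ω)) := by
    intro j hj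
    have h1 : Measurable[mT j] (fun ω => (x j ω, a j ω, υ j ω)) := by
      rw [hmT j]; exact Measurable.of_comap_le le_rfl
    have h2 : mT j ≤ mH ⊔ (mRest ⊔ mU) := by
      refine le_trans ?_ (le_trans le_sup_left le_sup_right)
      rw [hmRest]
      exact le_biSup mT (by simp [hj])
    exact h1.mono h2 le_rfl
  have hxB : ∀ j, Measurable[mH ⊔ (mRest ⊔ mU)] (x j) := by
    intro j
    by_cases hj : j = i
    · subst hj
      exact (measurable_fst.comp hxaB).mono le_sup_left le_rfl
    · exact measurable_fst.comp (htB j hj)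
  have haB : ∀ j, Measurable[mH ⊔ (mRest ⊔ mU)] (a j) := by
    intro j
    by_cases hj : j = i
    · subst hj
      exact (measurable_snd.comp hxaB).mono le_sup_left le_rfl
    · exact (measurable_fst.comp measurable_snd).comp (htB j hj)
  have huB : Measurable[mH ⊔ (mRest ⊔ mU)] u := by
    have h1 : Measurable[mU] u := by rw [hmU]; exact Measurable.of_comap_le le_rfl
    exact h1.mono (le_trans le_sup_right le_sup_right) le_rfl
  have hDB : Measurable[mH ⊔ (mRest ⊔ mU)] D := by
    have hD' : D = fun ω => F (fun j => (x j ω).2, fun j => a j ω, u ω) := funext hD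
    rw [hD']
    refine hF.comp (Measurable.prodMk ?_ (Measurable.prodMk ?_ huB))
    · exact (@measurable_pi_iff Ω _ _ (mH ⊔ (mRest ⊔ mU)) _ _).mpr
        fun j => measurable_snd.comp (hxB j)
    · exact (@measurable_pi_iff Ω _ _ (mH ⊔ (mRest ⊔ mU)) _ _).mpr fun j => haB j
  have hpairB : Measurable[mH ⊔ (mRest ⊔ mU)] (fun ω => (fun j => x j ω, D ω)) := by
    refine Measurable.prodMk ?_ hDB
    exact (@measurable_pi_iff Ω _ _ (mH ⊔ (mRest ⊔ mU)) _ _).mpr fun j => hxB j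
  exact (measurable_pi_apply l).comp (hz.mono hpairB.comap_le le_rfl)

/-- σ(x_i, a_i) and σ(υ_i) are below σ(triple i). -/
lemma sub_sigma_aux {Ω : Type*} {N d₁ d₂ : ℕ}
    (mT : Fin N → MeasurableSpace Ω) (mH : MeasurableSpace Ω)
    [m0 : MeasurableSpace Ω]
    {x : Fin N → Ω → (Fin d₁ → ℝ) × (Fin d₂ → ℝ)} {a : Fin N → Ω → ℝ} {υ : Fin N → Ω → ℝ}
    (i : Fin N)
    (hmT : ∀ j, mT j = MeasurableSpace.comap (fun ω => (x j ω, a j ω, υ j ω)) inferInstance)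
    (hmH : mH = MeasurableSpace.comap (fun ω => (x i ω, a i ω)) inferInstance) :
    mH ⊔ MeasurableSpace.comap (υ i) inferInstance ≤ mT i := by
  refine sup_le ?_ ?_
  · rw [hmH, hmT i]
    have he : (fun ω => (x i ω, a i ω)) =
        (fun v : ((Fin d₁ → ℝ) × (Fin d₂ → ℝ)) × ℝ × ℝ => (v.1, v.2.1)) ∘
        (fun ω => (x i ω, a i ω, υ i ω)) := rfl
    rw [he, ← MeasurableSpace.comap_comp]
    exact MeasurableSpace.comap_mono
      ((measurable_fst.prodMk (measurable_fst.comp measurable_snd)).comap_le)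
  · rw [hmT i]
    have he : υ i = (fun v : ((Fin d₁ → ℝ) × (Fin d₂ → ℝ)) × ℝ × ℝ => v.2.2) ∘
        (fun ω => (x i ω, a i ω, υ i ω)) := rfl
    rw [he, ← MeasurableSpace.comap_comp]
    exact MeasurableSpace.comap_mono ((measurable_snd.comp measurable_snd).comap_le)



lemma exclusion_zero_aux {Ω : Type*} {mA mH m2 : MeasurableSpace Ω}
    [m0 : MeasurableSpace Ω] {μ : Measure Ω} [IsProbabilityMeasure μ]
    (hmAle : mA ≤ m0) (hmHle : mH ≤ m0) (hm2le : m2 ≤ m0)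
    {zl υi : Ω → ℝ} (hzlm : Measurable zl) (hυim : Measurable υi)
    (Cz Cυ : ℝ) (hzb : ∀ ω, |zl ω| ≤ Cz) (hυb : ∀ ω, |υi ω| ≤ Cυ)
    (hzB : Measurable[mH ⊔ m2] zl)
    (hindep : Indep m2 (mH ⊔ MeasurableSpace.comap υi inferInstance) μ)
    (hfe' : μ[υi | mH] =ᵐ[μ] μ[υi | mA]) :
    ∫ ω, (zl ω - (μ[zl | mA]) ω) * (υi ω - (μ[υi | mA]) ω) ∂μ = 0 := by
  have hboundInt : ∀ (f : Ω → ℝ) (C : ℝ), Measurable f → (∀ ω, |f ω| ≤ C) → Integrable f μ := by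
    intro f C hf hb
    exact Integrable.mono' (integrable_const C) hf.aestronglyMeasurable
      (Filter.Eventually.of_forall fun ω => by simpa [Real.norm_eq_abs] using hb ω)
  have hprodInt : ∀ (f g : Ω → ℝ) (Cf Cg : ℝ), AEStronglyMeasurable f μ →
      AEStronglyMeasurable g μ → (∀ᵐ ω ∂μ, |f ω| ≤ Cf) → (∀ᵐ ω ∂μ, |g ω| ≤ Cg) →
      Integrable (fun ω => f ω * g ω) μ := by
    intro f g Cf Cg hfm hgm hfb hgb
    refine Integrable.mono' (integrable_const (Cf * Cg)) (hfm.mul hgm) ?_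
    filter_upwards [hfb, hgb] with ω h1 h2
    have h0 : (0:ℝ) ≤ Cf := le_trans (abs_nonneg _) h1
    calc ‖f ω * g ω‖ = |f ω| * |g ω| := by rw [Real.norm_eq_abs, abs_mul]
      _ ≤ Cf * Cg := mul_le_mul h1 h2 (abs_nonneg _) h0
  have hzint : Integrable zl μ := hboundInt _ Cz hzlm hzb
  have hυint : Integrable υi μ := hboundInt _ Cυ hυim hυb
  have hczb : ∀ᵐ ω ∂μ, |(μ[zl | mA]) ω| ≤ (Cz.toNNReal : ℝ) :=
    ae_bdd_condExp_of_ae_bdd (Filter.Eventually.of_forall fun ω =>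
      (hzb ω).trans (Real.le_coe_toNNReal Cz))
  have hcυb : ∀ᵐ ω ∂μ, |(μ[υi | mA]) ω| ≤ (Cυ.toNNReal : ℝ) :=
    ae_bdd_condExp_of_ae_bdd (Filter.Eventually.of_forall fun ω =>
      (hυb ω).trans (Real.le_coe_toNNReal Cυ))
  have hczsm : AEStronglyMeasurable (μ[zl | mA]) μ :=
    ((stronglyMeasurable_condExp (m := mA)).mono hmAle).aestronglyMeasurable
  have hcυsm : AEStronglyMeasurable (μ[υi | mA]) μ :=
    ((stronglyMeasurable_condExp (m := mA)).mono hmAle).aestronglyMeasurable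
  have hmBle : mH ⊔ m2 ≤ m0 := sup_le hmHle hm2le
  -- (C): ∫ zl υi = ∫ zl E[υi|mA]
  have hcond : μ[υi | mH ⊔ m2] =ᵐ[μ] μ[υi | mA] :=
    (condexp_sup_indep_aux hmHle hm2le hυint hυim hindep).trans hfe'
  have hzυint : Integrable (fun ω => zl ω * υi ω) μ :=
    hprodInt _ _ Cz Cυ hzlm.aestronglyMeasurable hυim.aestronglyMeasurable
      (Filter.Eventually.of_forall hzb) (Filter.Eventually.of_forall hυb)
  have hpullB : μ[zl * υi | mH ⊔ m2] =ᵐ[μ] zl * μ[υi | mH ⊔ m2] :=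
    condExp_mul_of_stronglyMeasurable_left hzB.stronglyMeasurable
      (show Integrable (zl * υi) μ from hzυint) hυint
  have hC : ∫ ω, zl ω * υi ω ∂μ = ∫ ω, zl ω * (μ[υi | mA]) ω ∂μ := by
    have h1 : ∫ ω, zl ω * υi ω ∂μ = ∫ ω, (μ[zl * υi | mH ⊔ m2]) ω ∂μ :=
      (integral_condExp hmBle).symm
    rw [h1, integral_congr_ae hpullB]
    refine integral_congr_ae ?_
    filter_upwards [hcond] with ω hω
    simp only [Pi.mul_apply]
    rw [hω]
  -- (A): ∫ E[zl|mA] υi = ∫ E[zl|mA] E[υi|mA]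
  have hczυint : Integrable ((μ[zl | mA]) * υi) μ :=
    hprodInt _ _ (Cz.toNNReal : ℝ) Cυ hczsm hυim.aestronglyMeasurable hczb
      (Filter.Eventually.of_forall hυb)
  have hA : ∫ ω, (μ[zl | mA]) ω * υi ω ∂μ
      = ∫ ω, (μ[zl | mA]) ω * (μ[υi | mA]) ω ∂μ := by
    have h := condExp_mul_of_stronglyMeasurable_left (stronglyMeasurable_condExp (m := mA))
      hczυint hυint
    have h1 : ∫ ω, (μ[zl | mA]) ω * υi ω ∂μ
        = ∫ ω, (μ[(μ[zl | mA]) * υi | mA]) ω ∂μ := (integral_condExp hmAle).symm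
    rw [h1, integral_congr_ae h]
    simp only [Pi.mul_apply]
  -- (B): ∫ zl E[υi|mA] = ∫ E[zl|mA] E[υi|mA]
  have hcυzint : Integrable ((μ[υi | mA]) * zl) μ :=
    hprodInt _ _ (Cυ.toNNReal : ℝ) Cz hcυsm hzlm.aestronglyMeasurable hcυb
      (Filter.Eventually.of_forall hzb)
  have hB : ∫ ω, zl ω * (μ[υi | mA]) ω ∂μ
      = ∫ ω, (μ[zl | mA]) ω * (μ[υi | mA]) ω ∂μ := by
    have h := condExp_mul_of_stronglyMeasurable_left (stronglyMeasurable_condExp (m := mA))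
      hcυzint hzint
    have h0 : ∫ ω, zl ω * (μ[υi | mA]) ω ∂μ = ∫ ω, (μ[υi | mA]) ω * zl ω ∂μ := by
      simp only [mul_comm]
    have h1 : ∫ ω, (μ[υi | mA]) ω * zl ω ∂μ
        = ∫ ω, (μ[(μ[υi | mA]) * zl | mA]) ω ∂μ := (integral_condExp hmAle).symm
    rw [h0, h1, integral_congr_ae h]
    simp only [Pi.mul_apply]
    simp only [mul_comm]
  -- combine
  have hccint : Integrable (fun ω => (μ[zl | mA]) ω * (μ[υi | mA]) ω) μ :=
    hprodInt _ _ (Cz.toNNReal : ℝ) (Cυ.toNNReal : ℝ) hczsm hcυsm hczb hcυb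
  have hzcυint : Integrable (fun ω => zl ω * (μ[υi | mA]) ω) μ :=
    hprodInt _ _ Cz (Cυ.toNNReal : ℝ) hzlm.aestronglyMeasurable hcυsm
      (Filter.Eventually.of_forall hzb) hcυb
  have hczυint' : Integrable (fun ω => (μ[zl | mA]) ω * υi ω) μ := hczυint
  have hexp : (fun ω => (zl ω - (μ[zl | mA]) ω) * (υi ω - (μ[υi | mA]) ω))
      = fun ω => zl ω * υi ω - zl ω * (μ[υi | mA]) ω
          - (μ[zl | mA]) ω * υi ω + (μ[zl | mA]) ω * (μ[υi | mA]) ω :=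
    funext fun ω => by ring
  have h1 : Integrable (fun ω => zl ω * υi ω - zl ω * (μ[υi | mA]) ω) μ :=
    hzυint.sub hzcυint
  have h2 : Integrable (fun ω => zl ω * υi ω - zl ω * (μ[υi | mA]) ω
      - (μ[zl | mA]) ω * υi ω) μ := h1.sub hczυint'
  rw [hexp, integral_add h2 hccint, integral_sub h1 hczυint',
    integral_sub hzυint hzcυint, hC, hA, hB]
  ring


end AuxLemmas

/-- **Identification (Theorem 3.2).**
Under the model (i.i.d. triples `(xᵢ, aᵢ, υᵢ)`, network errors `u` independent of them,
fixed-effect condition, network `D = F((x₂ⱼ)ⱼ, (aⱼ)ⱼ, u)`), with a bounded instrument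
vector `zᵢ` measurable w.r.t. `σ((xⱼ)ⱼ, D)`, a bounded regressor vector `wᵢ`, outcome
`yᵢ = ⟨wᵢ, β⁰⟩ + υᵢ` with bounded `υᵢ`, and the full-column-rank condition on
`M = 𝔼[(zᵢ − 𝔼[zᵢ|σ(aᵢ)])(wᵢ − 𝔼[wᵢ|σ(aᵢ)])ᵀ]`, the moment condition
`𝔼[(zᵢ − 𝔼[zᵢ|σ(aᵢ)])(yᵢ − 𝔼[yᵢ|σ(aᵢ)] − ⟨wᵢ − 𝔼[wᵢ|σ(aᵢ)], β⟩)] = 0`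
holds if and only if `β = β⁰`. -/
theorem identification_of_peer_effects
    {Ω : Type*} [MeasurableSpace Ω] (μ : Measure Ω) [IsProbabilityMeasure μ]
    (N d₁ d₂ L p : ℕ) (hN : 2 ≤ N)
    (x : Fin N → Ω → (Fin d₁ → ℝ) × (Fin d₂ → ℝ))
    (a : Fin N → Ω → ℝ)
    (υ : Fin N → Ω → ℝ)
    (u : Ω → Fin N → Fin N → ℝ)
    (hx : ∀ i, Measurable (x i)) (ha : ∀ i, Measurable (a i))
    (hυmeas : ∀ i, Measurable (υ i)) (hυint : ∀ i, Integrable (υ i) μ)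
    (hu : Measurable u)
    -- (i) the triples (xᵢ, aᵢ, υᵢ), i = 1,…,N, are i.i.d.
    (hiid_indep : iIndepFun
      (fun i ω => (x i ω, a i ω, υ i ω)) μ)
    (hiid_ident : ∀ i j, IdentDistrib (fun ω => (x i ω, a i ω, υ i ω))
      (fun ω => (x j ω, a j ω, υ j ω)) μ μ)
    -- (ii) u is independent of the family ((xᵢ, aᵢ, υᵢ))ᵢ
    (hu_indep : IndepFun u (fun ω => fun i : Fin N => (x i ω, a i ω, υ i ω)) μ)
    -- (iii) fixed effect: 𝔼[υᵢ | σ(xᵢ, aᵢ)] = 𝔼[υᵢ | σ(aᵢ)] a.s.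
    (hfe : ∀ i, μ[υ i | MeasurableSpace.comap (fun ω => (x i ω, a i ω)) inferInstance]
      =ᵐ[μ] μ[υ i | MeasurableSpace.comap (a i) inferInstance])
    -- the network: D = F((x₂ⱼ)ⱼ, (aⱼ)ⱼ, u), F measurable
    (F : (Fin N → Fin d₂ → ℝ) × (Fin N → ℝ) × (Fin N → Fin N → ℝ) →
      (Fin N → Fin N → ℝ))
    (hF : Measurable F)
    (D : Ω → (Fin N → Fin N → ℝ))
    (hD : ∀ ω, D ω = F (fun j => (x j ω).2, fun j => a j ω, u ω))
    (i : Fin N)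
    -- the instruments: bounded and measurable w.r.t. σ((xⱼ)ⱼ, D)
    (z : Ω → Fin L → ℝ)
    (hz : Measurable[MeasurableSpace.comap (fun ω => (fun j => x j ω, D ω)) inferInstance] z)
    (Cz : ℝ) (hzb : ∀ ω l, |z ω l| ≤ Cz)
    -- the regressors: bounded
    (w : Ω → Fin p → ℝ) (hw : Measurable w) (Cw : ℝ) (hwb : ∀ ω j, |w ω j| ≤ Cw)
    (Cυ : ℝ) (hυb : ∀ ω, |υ i ω| ≤ Cυ)
    -- the outcome equation
    (β0 : Fin p → ℝ)
    (y : Ω → ℝ) (hy : ∀ ω, y ω = (∑ j, w ω j * β0 j) + υ i ω)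
    -- rank condition
    (M : Matrix (Fin L) (Fin p) ℝ)
    (hM : ∀ l j, M l j =
      ∫ ω, (z ω l - (μ[fun ω' => z ω' l | MeasurableSpace.comap (a i) inferInstance]) ω)
        * (w ω j - (μ[fun ω' => w ω' j | MeasurableSpace.comap (a i) inferInstance]) ω) ∂μ)
    (hrank : M.rank = p) :
    ∀ β : Fin p → ℝ,
      (∀ l, ∫ ω,
          (z ω l - (μ[fun ω' => z ω' l | MeasurableSpace.comap (a i) inferInstance]) ω) *
          ((y ω - (μ[y | MeasurableSpace.comap (a i) inferInstance]) ω) -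
            ∑ j, (w ω j - (μ[fun ω' => w ω' j | MeasurableSpace.comap (a i) inferInstance]) ω)
              * β j) ∂μ = 0)
      ↔ β = β0 := by
  classical
  intro β
  have hmAle : MeasurableSpace.comap (a i) inferInstance ≤ ‹MeasurableSpace Ω› :=
    (ha i).comap_le
  have htriple : ∀ j, Measurable (fun ω => (x j ω, a j ω, υ j ω)) :=
    fun j => (hx j).prodMk ((ha j).prodMk (hυmeas j))
  have hmHle : MeasurableSpace.comap (fun ω => (x i ω, a i ω)) inferInstance
      ≤ ‹MeasurableSpace Ω› := ((hx i).prodMk (ha i)).comap_le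
  have hm2le : ((⨆ j ∈ ({i}ᶜ : Set (Fin N)), MeasurableSpace.comap
        (fun ω => (x j ω, a j ω, υ j ω)) inferInstance)
      ⊔ MeasurableSpace.comap u inferInstance) ≤ ‹MeasurableSpace Ω› :=
    sup_le (iSup_le fun j => iSup_le fun _ => (htriple j).comap_le) hu.comap_le
  -- measurability of D and z
  have hDmeas : Measurable D := by
    have hD' : D = fun ω => F (fun j => (x j ω).2, fun j => a j ω, u ω) := funext hD
    rw [hD']
    exact hF.comp ((measurable_pi_lambda _ fun j => measurable_snd.comp (hx j)).prodMk
      ((measurable_pi_lambda _ fun j => ha j).prodMk hu))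
  have hpairmeas : Measurable (fun ω => (fun j => x j ω, D ω)) :=
    (measurable_pi_lambda _ fun j => hx j).prodMk hDmeas
  have hzmeas : Measurable z := hz.mono hpairmeas.comap_le le_rfl
  have hzl : ∀ l, Measurable (fun ω => z ω l) := fun l => (measurable_pi_apply l).comp hzmeas
  have hwj : ∀ j, Measurable (fun ω => w ω j) := fun j => (measurable_pi_apply j).comp hw
  -- integrability helpers
  have hboundInt : ∀ (f : Ω → ℝ) (C : ℝ), Measurable f → (∀ ω, |f ω| ≤ C) → Integrable f μ := by
    intro f C hf hb
    exact Integrable.mono' (integrable_const C) hf.aestronglyMeasurable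
      (Filter.Eventually.of_forall fun ω => by simpa [Real.norm_eq_abs] using hb ω)
  have hzint : ∀ l, Integrable (fun ω => z ω l) μ :=
    fun l => hboundInt _ Cz (hzl l) fun ω => hzb ω l
  have hwint : ∀ j, Integrable (fun ω => w ω j) μ :=
    fun j => hboundInt _ Cw (hwj j) fun ω => hwb ω j
  have hυiint : Integrable (υ i) μ := hυint i
  -- a.e. bounds for conditional expectations
  have hczb : ∀ l, ∀ᵐ ω ∂μ, |(μ[fun ω' => z ω' l | MeasurableSpace.comap (a i) inferInstance]) ω|
      ≤ (Cz.toNNReal : ℝ) :=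
    fun l => ae_bdd_condExp_of_ae_bdd (Filter.Eventually.of_forall fun ω =>
      (hzb ω l).trans (Real.le_coe_toNNReal Cz))
  have hcwb : ∀ j, ∀ᵐ ω ∂μ, |(μ[fun ω' => w ω' j | MeasurableSpace.comap (a i) inferInstance]) ω|
      ≤ (Cw.toNNReal : ℝ) :=
    fun j => ae_bdd_condExp_of_ae_bdd (Filter.Eventually.of_forall fun ω =>
      (hwb ω j).trans (Real.le_coe_toNNReal Cw))
  have hcυb : ∀ᵐ ω ∂μ, |(μ[υ i | MeasurableSpace.comap (a i) inferInstance]) ω|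
      ≤ (Cυ.toNNReal : ℝ) :=
    ae_bdd_condExp_of_ae_bdd (Filter.Eventually.of_forall fun ω =>
      (hυb ω).trans (Real.le_coe_toNNReal Cυ))
  -- product integrability for a.e. bounded factors
  have hprodInt : ∀ (f g : Ω → ℝ) (Cf Cg : ℝ), AEStronglyMeasurable f μ →
      AEStronglyMeasurable g μ → (∀ᵐ ω ∂μ, |f ω| ≤ Cf) → (∀ᵐ ω ∂μ, |g ω| ≤ Cg) →
      Integrable (fun ω => f ω * g ω) μ := by
    intro f g Cf Cg hfm hgm hfb hgb
    refine Integrable.mono' (integrable_const (Cf * Cg)) (hfm.mul hgm) ?_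
    filter_upwards [hfb, hgb] with ω h1 h2
    have h0 : (0:ℝ) ≤ Cf := le_trans (abs_nonneg _) h1
    calc ‖f ω * g ω‖ = |f ω| * |g ω| := by rw [Real.norm_eq_abs, abs_mul]
      _ ≤ Cf * Cg := mul_le_mul h1 h2 (abs_nonneg _) h0
  have hczsm : ∀ l, AEStronglyMeasurable
      (μ[fun ω' => z ω' l | MeasurableSpace.comap (a i) inferInstance]) μ :=
    fun l => ((stronglyMeasurable_condExp
      (m := MeasurableSpace.comap (a i) inferInstance)).mono hmAle).aestronglyMeasurable
  have hcwsm : ∀ j, AEStronglyMeasurable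
      (μ[fun ω' => w ω' j | MeasurableSpace.comap (a i) inferInstance]) μ :=
    fun j => ((stronglyMeasurable_condExp
      (m := MeasurableSpace.comap (a i) inferInstance)).mono hmAle).aestronglyMeasurable
  have hcυsm : AEStronglyMeasurable
      (μ[υ i | MeasurableSpace.comap (a i) inferInstance]) μ :=
    ((stronglyMeasurable_condExp
      (m := MeasurableSpace.comap (a i) inferInstance)).mono hmAle).aestronglyMeasurable
  have hzdiffb : ∀ l, ∀ᵐ ω ∂μ,
      |z ω l - (μ[fun ω' => z ω' l | MeasurableSpace.comap (a i) inferInstance]) ω|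
      ≤ Cz + (Cz.toNNReal : ℝ) := by
    intro l
    filter_upwards [hczb l] with ω h1
    exact (abs_sub _ _).trans (add_le_add (hzb ω l) h1)
  have hwdiffb : ∀ j, ∀ᵐ ω ∂μ,
      |w ω j - (μ[fun ω' => w ω' j | MeasurableSpace.comap (a i) inferInstance]) ω|
      ≤ Cw + (Cw.toNNReal : ℝ) := by
    intro j
    filter_upwards [hcwb j] with ω h1
    exact (abs_sub _ _).trans (add_le_add (hwb ω j) h1)
  have hυdiffb : ∀ᵐ ω ∂μ,
      |υ i ω - (μ[υ i | MeasurableSpace.comap (a i) inferInstance]) ω|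
      ≤ Cυ + (Cυ.toNNReal : ℝ) := by
    filter_upwards [hcυb] with ω h1
    exact (abs_sub _ _).trans (add_le_add (hυb ω) h1)
  have hzdiffsm : ∀ l, AEStronglyMeasurable
      (fun ω => z ω l - (μ[fun ω' => z ω' l | MeasurableSpace.comap (a i) inferInstance]) ω) μ :=
    fun l => (hzl l).aestronglyMeasurable.sub (hczsm l)
  have hwdiffsm : ∀ j, AEStronglyMeasurable
      (fun ω => w ω j - (μ[fun ω' => w ω' j | MeasurableSpace.comap (a i) inferInstance]) ω) μ :=
    fun j => (hwj j).aestronglyMeasurable.sub (hcwsm j)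
  have hυdiffsm : AEStronglyMeasurable
      (fun ω => υ i ω - (μ[υ i | MeasurableSpace.comap (a i) inferInstance]) ω) μ :=
    (hυmeas i).aestronglyMeasurable.sub hcυsm
  -- ===== THE EXCLUSION RESTRICTION =====
  have hzero : ∀ l, ∫ ω,
      (z ω l - (μ[fun ω' => z ω' l | MeasurableSpace.comap (a i) inferInstance]) ω) *
      (υ i ω - (μ[υ i | MeasurableSpace.comap (a i) inferInstance]) ω) ∂μ = 0 := by
    intro l
    refine exclusion_zero_aux
      (mH := MeasurableSpace.comap (fun ω => (x i ω, a i ω)) inferInstance)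
      (m2 := (⨆ j ∈ ({i}ᶜ : Set (Fin N)), MeasurableSpace.comap
          (fun ω => (x j ω, a j ω, υ j ω)) inferInstance)
        ⊔ MeasurableSpace.comap u inferInstance)
      hmAle hmHle hm2le (hzl l) (hυmeas i) Cz Cυ (fun ω => hzb ω l) hυb ?_ ?_ (hfe i)
    · exact zmeas_model_aux
        (fun j => MeasurableSpace.comap (fun ω => (x j ω, a j ω, υ j ω)) inferInstance)
        _ _ _ i (fun j => rfl) rfl rfl rfl hF hD hz l
    · have h1 := indep_model_aux
        (fun j => MeasurableSpace.comap (fun ω => (x j ω, a j ω, υ j ω)) inferInstance)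
        _ _ hx ha hυmeas hu hiid_indep hu_indep i (fun j => rfl) rfl rfl
      have h2 := sub_sigma_aux
        (fun j => MeasurableSpace.comap (fun ω => (x j ω, a j ω, υ j ω)) inferInstance)
        _ i (fun j => rfl) rfl
      exact indep_mono_aux h1 le_rfl h2
  -- ===== decomposition of E[y | a_i] =====
  have hsint : Integrable (fun ω => ∑ j, w ω j * β0 j) μ :=
    integrable_finset_sum _ fun j _ => (hwint j).mul_const _
  have hcy : μ[y | MeasurableSpace.comap (a i) inferInstance] =ᵐ[μ]
      fun ω => (∑ j, (μ[fun ω' => w ω' j | MeasurableSpace.comap (a i) inferInstance]) ω * β0 j)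
        + (μ[υ i | MeasurableSpace.comap (a i) inferInstance]) ω := by
    have h1 : y = (fun ω => ∑ j, w ω j * β0 j) + υ i := funext hy
    have h2 : μ[y | MeasurableSpace.comap (a i) inferInstance] =ᵐ[μ]
        μ[fun ω => ∑ j, w ω j * β0 j | MeasurableSpace.comap (a i) inferInstance]
        + μ[υ i | MeasurableSpace.comap (a i) inferInstance] := by
      rw [h1]; exact condExp_add hsint hυiint _
    have h3 : μ[fun ω => ∑ j, w ω j * β0 j | MeasurableSpace.comap (a i) inferInstance] =ᵐ[μ]
        fun ω => ∑ j, (μ[fun ω' => w ω' j | MeasurableSpace.comap (a i) inferInstance]) ω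
          * β0 j := by
      have hfun : (fun ω => ∑ j, w ω j * β0 j)
          = ∑ j ∈ Finset.univ, (β0 j • fun ω' => w ω' j) := by
        funext ω
        rw [Finset.sum_apply]
        exact Finset.sum_congr rfl fun j _ => by simp [mul_comm]
      rw [hfun]
      have h4 := condExp_finsetSum (m := MeasurableSpace.comap (a i) inferInstance) (μ := μ)
        (s := Finset.univ) (f := fun (j : Fin p) => (β0 j • fun ω' => w ω' j))
        (fun j _ => (hwint j).smul (β0 j))
      refine h4.trans ?_
      have h5 : ∀ᵐ ω ∂μ, ∀ j : Fin p,
          (μ[β0 j • fun ω' => w ω' j | MeasurableSpace.comap (a i) inferInstance]) ω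
          = β0 j * (μ[fun ω' => w ω' j | MeasurableSpace.comap (a i) inferInstance]) ω := by
        rw [ae_all_iff]
        intro j
        filter_upwards [condExp_smul (μ := μ) (m := MeasurableSpace.comap (a i) inferInstance)
          (β0 j) (fun ω' => w ω' j)] with ω hω
        simpa using hω
      filter_upwards [h5] with ω hω
      rw [Finset.sum_apply]
      exact Finset.sum_congr rfl fun j _ => by rw [hω j]; ring
    refine h2.trans ?_
    filter_upwards [h3] with ω hω
    simp only [Pi.add_apply]
    rw [hω]
  -- ===== the key moment identity =====
  have hzwint : ∀ l j, Integrable (fun ω =>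
      (z ω l - (μ[fun ω' => z ω' l | MeasurableSpace.comap (a i) inferInstance]) ω) *
      (w ω j - (μ[fun ω' => w ω' j | MeasurableSpace.comap (a i) inferInstance]) ω)) μ :=
    fun l j => hprodInt _ _ _ _ (hzdiffsm l) (hwdiffsm j) (hzdiffb l) (hwdiffb j)
  have hzυdint : ∀ l, Integrable (fun ω =>
      (z ω l - (μ[fun ω' => z ω' l | MeasurableSpace.comap (a i) inferInstance]) ω) *
      (υ i ω - (μ[υ i | MeasurableSpace.comap (a i) inferInstance]) ω)) μ :=
    fun l => hprodInt _ _ _ _ (hzdiffsm l) hυdiffsm (hzdiffb l) hυdiffb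
  have key : ∀ l, (∫ ω,
      (z ω l - (μ[fun ω' => z ω' l | MeasurableSpace.comap (a i) inferInstance]) ω) *
      ((y ω - (μ[y | MeasurableSpace.comap (a i) inferInstance]) ω) -
        ∑ j, (w ω j - (μ[fun ω' => w ω' j | MeasurableSpace.comap (a i) inferInstance]) ω)
          * β j) ∂μ)
      = ∑ j, M l j * (β0 j - β j) := by
    intro l
    have hintg : (fun ω =>
        (z ω l - (μ[fun ω' => z ω' l | MeasurableSpace.comap (a i) inferInstance]) ω) *
        ((y ω - (μ[y | MeasurableSpace.comap (a i) inferInstance]) ω) -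
          ∑ j, (w ω j - (μ[fun ω' => w ω' j | MeasurableSpace.comap (a i) inferInstance]) ω)
            * β j))
        =ᵐ[μ] fun ω => (∑ j, (β0 j - β j) *
            ((z ω l - (μ[fun ω' => z ω' l | MeasurableSpace.comap (a i) inferInstance]) ω) *
            (w ω j - (μ[fun ω' => w ω' j | MeasurableSpace.comap (a i) inferInstance]) ω)))
          + (z ω l - (μ[fun ω' => z ω' l | MeasurableSpace.comap (a i) inferInstance]) ω) *
            (υ i ω - (μ[υ i | MeasurableSpace.comap (a i) inferInstance]) ω) := by
      filter_upwards [hcy] with ω hω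
      rw [hy ω, hω]
      have e : (∑ j, w ω j * β0 j) + υ i ω
          - ((∑ j, (μ[fun ω' => w ω' j | MeasurableSpace.comap (a i) inferInstance]) ω * β0 j)
            + (μ[υ i | MeasurableSpace.comap (a i) inferInstance]) ω)
          - ∑ j, (w ω j - (μ[fun ω' => w ω' j | MeasurableSpace.comap (a i) inferInstance]) ω)
            * β j
          = (∑ j, (w ω j - (μ[fun ω' => w ω' j | MeasurableSpace.comap (a i) inferInstance]) ω)
              * (β0 j - β j))
            + (υ i ω - (μ[υ i | MeasurableSpace.comap (a i) inferInstance]) ω) := by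
        simp only [mul_sub, sub_mul, Finset.sum_sub_distrib]
        ring
      rw [e, mul_add, Finset.mul_sum]
      congr 1
      exact Finset.sum_congr rfl fun j _ => by ring
    rw [integral_congr_ae hintg,
      integral_add (integrable_finset_sum _ fun j _ => ((hzwint l j).const_mul _)) (hzυdint l),
      integral_finset_sum _ (fun j _ => ((hzwint l j).const_mul _)), hzero l, add_zero]
    refine Finset.sum_congr rfl fun j _ => ?_
    rw [integral_const_mul, ← hM l j]
    ring
  -- ===== conclusion =====
  constructor
  · intro h
    have hv : ∀ l, ∑ j, M l j * (β0 j - β j) = 0 := fun l => (key l).symm.trans (h l)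
    have hmul : M.mulVec (fun j => β0 j - β j) = 0 := by
      funext l
      simpa [Matrix.mulVec, dotProduct] using hv l
    have hker : (fun j => β0 j - β j) = (0 : Fin p → ℝ) := by
      have hmem : (fun j => β0 j - β j) ∈ LinearMap.ker M.mulVecLin := by
        simpa [Matrix.mulVecLin_apply] using hmul
      have hrn := LinearMap.finrank_range_add_finrank_ker (Matrix.mulVecLin M)
      rw [Module.finrank_fin_fun] at hrn
      have hr : Module.finrank ℝ ↥(LinearMap.range M.mulVecLin) = p := hrank
      have h0 : Module.finrank ℝ ↥(LinearMap.ker M.mulVecLin) = 0 := by omega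
      have hbot : LinearMap.ker M.mulVecLin = ⊥ := Submodule.finrank_eq_zero.mp h0
      rw [hbot] at hmem
      simpa using hmem
    funext j
    have hj := congrFun hker j
    simp only [Pi.zero_apply] at hj
    linarith
  · intro h
    subst h
    intro l
    rw [key l]
    simp
end
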